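/- Let T be an n×n unitary matrix, let u be the bottom row of T with its rightmost entry removed (a 1×(n−1) row vector), and let T₀ be the (n−1)×(n−1) top-left corner of T. Then T₀*T₀ = I_{n−1} − u*u, and the eigenvalues of sqrt(T₀*T₀) are 1 with multiplicity n−2 and sqrt(1 − ‖u‖²) with multiplicity 1; consequently ‖sqrt(T₀*T₀) − I‖_F = |sqrt(1 − ‖u‖²) − 1| ≤ 1. -/

import Mathlib

set_option synthInstance.maxHeartbeats 1000000
set_option maxHeartbeats 2000000


open Matrix Finset Polynomial
open scoped ComplexOrder

/-- The Frobenius norm of a complex matrix. -/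
noncomputable def frobNorm {m n : Type*} [Fintype m] [Fintype n]
    (M : Matrix m n ℂ) : ℝ :=
  Real.sqrt ((Matrix.trace (Mᴴ * M)).re)

lemma det_smul_one_add_col_mul_row {K : Type*} [Field K] {m : Type*} [Fintype m] [DecidableEq m]
    [Nonempty m] (a : K) (v w : m → K) (ha : a ≠ 0) :
    (a • (1 : Matrix m m K) + Matrix.replicateCol (Fin 1) v * Matrix.replicateRow (Fin 1) w).det
      = a ^ (Fintype.card m - 1) * (a + w ⬝ᵥ v) := by
  have h : a • (1 : Matrix m m K) + Matrix.replicateCol (Fin 1) v * Matrix.replicateRow (Fin 1) w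
      = a • (1 + Matrix.replicateCol (Fin 1) (a⁻¹ • v) * Matrix.replicateRow (Fin 1) w) := by
    rw [smul_add, Matrix.replicateCol_smul, Matrix.smul_mul, smul_smul, mul_inv_cancel₀ ha, one_smul]
  have hd : (1 + Matrix.replicateCol (Fin 1) (a⁻¹ • v) * Matrix.replicateRow (Fin 1) w).det
      = 1 + w ⬝ᵥ (a⁻¹ • v) := Matrix.det_one_add_replicateCol_mul_replicateRow (ι := Fin 1) _ _
  rw [h, Matrix.det_smul, hd, dotProduct_smul]
  obtain ⟨k, hk⟩ := Nat.exists_eq_succ_of_ne_zero (Fintype.card_ne_zero (α := m))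
  rw [hk, Nat.succ_sub_one, pow_succ, smul_eq_mul]
  field_simp

lemma det_smul_one_add_col_mul_row_poly {m : Type*} [Fintype m] [DecidableEq m]
    [Nonempty m] (a : ℂ[X]) (v w : m → ℂ[X]) (ha : a ≠ 0) :
    (a • (1 : Matrix m m ℂ[X]) + Matrix.replicateCol (Fin 1) v * Matrix.replicateRow (Fin 1) w).det
      = a ^ (Fintype.card m - 1) * (a + w ⬝ᵥ v) := by
  set f := algebraMap ℂ[X] (RatFunc ℂ) with hf
  have hinj : Function.Injective f := IsFractionRing.injective ℂ[X] (RatFunc ℂ)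
  apply hinj
  have hmap : (a • (1 : Matrix m m ℂ[X]) + Matrix.replicateCol (Fin 1) v * Matrix.replicateRow (Fin 1) w).map f
      = f a • (1 : Matrix m m (RatFunc ℂ)) + Matrix.replicateCol (Fin 1) (f ∘ v) * Matrix.replicateRow (Fin 1) (f ∘ w) := by
    ext i j
    simp [Matrix.mul_apply, Matrix.one_apply, apply_ite f]
  rw [show f (a • (1:Matrix m m ℂ[X]) + Matrix.replicateCol (Fin 1) v * Matrix.replicateRow (Fin 1) w).det
      = ((a • (1:Matrix m m ℂ[X]) + Matrix.replicateCol (Fin 1) v * Matrix.replicateRow (Fin 1) w).map f).det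
      from (RingHom.map_det f _), hmap, det_smul_one_add_col_mul_row _ _ _ (by
    simpa using (map_ne_zero_iff f hinj).mpr ha)]
  simp [dotProduct, Function.comp]

lemma cs_complex {m : Type*} [Fintype m] (a b : m → ℂ) :
    Complex.normSq (∑ i, a i * b i) ≤ (∑ i, Complex.normSq (a i)) * (∑ i, Complex.normSq (b i)) := by
  have h1 : ‖∑ i, a i * b i‖ ≤ ∑ i, ‖a i‖ * ‖b i‖ := by
    simpa using norm_sum_le Finset.univ (fun i => a i * b i)
  have h2 := Finset.sum_mul_sq_le_sq_mul_sq Finset.univ (fun i => ‖a i‖)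
    (fun i => ‖b i‖)
  calc Complex.normSq (∑ i, a i * b i) = ‖∑ i, a i * b i‖ ^ 2 := by
        rw [Complex.sq_norm]
    _ ≤ (∑ i, ‖a i‖ * ‖b i‖) ^ 2 := by
        apply pow_le_pow_left₀ (norm_nonneg _) h1
    _ ≤ (∑ i, ‖a i‖ ^ 2) * (∑ i, ‖b i‖ ^ 2) := h2
    _ = _ := by simp [Complex.sq_norm]


/-- The positive semidefinite square root of a positive semidefinite matrix
(the definition `Matrix.PosSemidef.sqrt` of the older Mathlib, removed since). -/
noncomputable def Matrix.PosSemidef.sqrt {n : Type*} [Fintype n] [DecidableEq n]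
    {𝕜 : Type*} [RCLike 𝕜] {A : Matrix n n 𝕜} (hA : A.PosSemidef) : Matrix n n 𝕜 :=
  hA.1.eigenvectorUnitary.1 * diagonal ((↑) ∘ (√·) ∘ hA.1.eigenvalues) *
  (star hA.1.eigenvectorUnitary : Matrix n n 𝕜)

section
open scoped MatrixOrder
lemma Matrix.PosSemidef.eq_sqrt_of_sq_eq {n : Type*} [Fintype n] [DecidableEq n]
    {A B : Matrix n n ℂ} (hA : A.PosSemidef) (hB : B.PosSemidef) (hAB : A ^ 2 = B) :
    A = hB.sqrt := by
  have h1 : CFC.sqrt B = A := CFC.sqrt_unique (by rw [← hAB, sq]) hA.nonneg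
  rw [← h1, CFC.sqrt_eq_cfc, cfc_nnreal_eq_real _ B, hB.1.cfc_eq, Matrix.IsHermitian.cfc,
    Matrix.PosSemidef.sqrt, Unitary.conjStarAlgAut_apply]
  congr 3
  funext i
  simp [Real.coe_sqrt, hB.eigenvalues_nonneg i]
end

/-- Let `T` be an `(n+2)×(n+2)` unitary matrix, `u` its bottom row with the last
entry removed, and `T₀` its top-left `(n+1)×(n+1)` corner.  Then
`T₀ᴴT₀ = I − uᴴu`; the eigenvalues of `√(T₀ᴴT₀)` are `1` with multiplicity `n`
and `√(1 − ‖u‖²)` with multiplicity `1` (expressed via the characteristic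
polynomial); and `‖√(T₀ᴴT₀) − I‖_F = |√(1 − ‖u‖²) − 1| ≤ 1`. -/
theorem stmt3 (n : ℕ) (T : Matrix (Fin (n + 2)) (Fin (n + 2)) ℂ)
    (hT : T ∈ Matrix.unitaryGroup (Fin (n + 2)) ℂ)
    (T₀ : Matrix (Fin (n + 1)) (Fin (n + 1)) ℂ)
    (hT₀ : T₀ = T.submatrix Fin.castSucc Fin.castSucc)
    (u : Matrix (Fin 1) (Fin (n + 1)) ℂ)
    (hu : u = fun _ j => T (Fin.last (n + 1)) j.castSucc)
    (hPSD : (T₀ᴴ * T₀).PosSemidef) :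
    T₀ᴴ * T₀ = 1 - uᴴ * u ∧
    (hPSD.sqrt).charpoly =
      (X - C 1) ^ n *
        (X - C ((Real.sqrt (1 - ((Matrix.trace (uᴴ * u)).re)) : ℝ) : ℂ)) ∧
    frobNorm (hPSD.sqrt - 1) =
      |Real.sqrt (1 - ((Matrix.trace (uᴴ * u)).re)) - 1| ∧
    frobNorm (hPSD.sqrt - 1) ≤ 1 := by
  -- Part 1
  have h1 : T₀ᴴ * T₀ = 1 - uᴴ * u := by
    have hTT : star T * T = 1 := (Matrix.mem_unitaryGroup_iff'.mp hT)
    ext i j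
    have h2 := Matrix.ext_iff.2 hTT i.castSucc j.castSucc
    rw [Matrix.mul_apply, Fin.sum_univ_castSucc] at h2
    simp only [Matrix.star_apply, Matrix.sub_apply, Matrix.mul_apply, Matrix.one_apply,
      Matrix.conjTranspose_apply, hT₀, hu, Matrix.submatrix_apply, Fin.castSucc_inj] at h2 ⊢
    show _ = _ - ∑ k : Fin 1, star (T (Fin.last (n + 1)) i.castSucc) * T (Fin.last (n + 1)) j.castSucc
    rw [Fin.sum_univ_one]
    linear_combination h2
  -- basic data
  set M : Matrix (Fin (n+1)) (Fin (n+1)) ℂ := uᴴ * u with hMdef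
  have hM : ∀ i j, M i j = (starRingEnd ℂ) (u 0 i) * u 0 j := by
    intro i j
    simp [hMdef, Matrix.mul_apply, Matrix.conjTranspose_apply, Fin.sum_univ_one]
  set s : ℝ := (Matrix.trace M).re with hs
  have htrace : Matrix.trace M = ((∑ i, Complex.normSq (u 0 i) : ℝ) : ℂ) := by
    rw [Matrix.trace, Complex.ofReal_sum]
    refine Finset.sum_congr rfl fun i _ => ?_
    rw [Matrix.diag_apply, hM, mul_comm, Complex.mul_conj]
  have hsval : s = ∑ i, Complex.normSq (u 0 i) := by rw [hs, htrace, Complex.ofReal_re]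
  have hs0 : 0 ≤ s := by
    rw [hsval]; exact Finset.sum_nonneg fun i _ => Complex.normSq_nonneg _
  have htrC : Matrix.trace M = (s : ℂ) := by rw [htrace, hsval]
  have husum : ∑ j, u 0 j * (starRingEnd ℂ) (u 0 j) = (s : ℂ) := by
    rw [hsval, Complex.ofReal_sum]
    exact Finset.sum_congr rfl fun i _ => Complex.mul_conj _
  have hMM : M * M = (s : ℂ) • M := by
    ext i j
    simp only [Matrix.mul_apply, Matrix.smul_apply, hM, smul_eq_mul]
    calc ∑ k, ((starRingEnd ℂ) (u 0 i) * u 0 k) * ((starRingEnd ℂ) (u 0 k) * u 0 j)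
        = (∑ k, u 0 k * (starRingEnd ℂ) (u 0 k)) * ((starRingEnd ℂ) (u 0 i) * u 0 j) := by
          rw [Finset.sum_mul]; exact Finset.sum_congr rfl fun k _ => by ring
      _ = (s : ℂ) * ((starRingEnd ℂ) (u 0 i) * u 0 j) := by rw [husum]
  have hMzero : s = 0 → M = 0 := by
    intro h0
    have hz : ∀ i, u 0 i = 0 := by
      intro i
      have hsum0 : ∑ i, Complex.normSq (u 0 i) = 0 := by rw [← hsval]; exact h0
      have := (Finset.sum_eq_zero_iff_of_nonneg
        (fun i _ => Complex.normSq_nonneg (u 0 i))).mp hsum0 i (Finset.mem_univ i)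
      exact Complex.normSq_eq_zero.mp this
    ext i j
    simp [hM, hz]
  have hMpsd : M.PosSemidef := hMdef ▸ Matrix.posSemidef_conjTranspose_mul_self u
  -- s ≤ 1
  have hs1 : s ≤ 1 := by
    have hTT : T * star T = 1 := (Matrix.mem_unitaryGroup_iff.mp hT)
    have h2 := Matrix.ext_iff.2 hTT (Fin.last (n+1)) (Fin.last (n+1))
    rw [Matrix.mul_apply, Fin.sum_univ_castSucc] at h2
    simp only [Matrix.star_apply, Matrix.one_apply_eq] at h2
    have h3 : (s : ℂ) + ((Complex.normSq (T (Fin.last (n+1)) (Fin.last (n+1))) : ℝ) : ℂ) = 1 := by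
      rw [← Complex.mul_conj, ← h2]
      congr 1
      rw [← husum]
      refine Finset.sum_congr rfl fun k _ => ?_
      simp only [hu, Complex.star_def]
    have h4 : s + Complex.normSq (T (Fin.last (n+1)) (Fin.last (n+1))) = 1 := by
      exact_mod_cast h3
    linarith [Complex.normSq_nonneg (T (Fin.last (n+1)) (Fin.last (n+1)))]
  set r : ℝ := Real.sqrt (1 - s) with hr
  have hr2 : r ^ 2 = 1 - s := Real.sq_sqrt (by linarith)
  have hr0 : 0 ≤ r := Real.sqrt_nonneg _
  have hr1 : r ≤ 1 := by nlinarith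
  set c : ℝ := (r - 1) / s with hc
  have hcs : 1 + c * s = r := by
    by_cases h0 : s = 0
    · simp [hc, h0, hr, Real.sqrt_one]
    · rw [hc, div_mul_cancel₀ _ h0]; ring
  set S : Matrix (Fin (n+1)) (Fin (n+1)) ℂ := 1 + (c : ℂ) • M with hSdef
  have hS2 : S * S = 1 - M := by
    by_cases h0 : s = 0
    · rw [hSdef, hMzero h0]; simp
    · have hkey : (2 * c + c ^ 2 * s : ℝ) = -1 := by
        rw [hc]; field_simp; nlinarith
      have hkeyC : (c:ℂ) + (c:ℂ) + (c:ℂ)*(c:ℂ)*(s:ℂ) = -1 := by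
        have h := congrArg (fun x : ℝ => (x:ℂ)) hkey
        push_cast at h
        linear_combination h
      rw [hSdef]
      calc (1 + (c:ℂ) • M) * (1 + (c:ℂ) • M)
          = 1 + (c:ℂ) • M + (c:ℂ) • M + ((c:ℂ) * (c:ℂ)) • (M * M) := by
            rw [mul_add, mul_one, add_mul, one_mul, Matrix.smul_mul, Matrix.mul_smul, smul_smul]
            abel
        _ = 1 + ((c:ℂ) + (c:ℂ) + (c:ℂ)*(c:ℂ)*(s:ℂ)) • M := by
            rw [hMM, smul_smul, add_smul, add_smul]; abel
        _ = 1 - M := by rw [hkeyC, neg_one_smul, ← sub_eq_add_neg]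
  have hSpsd : S.PosSemidef := by
    by_cases h0 : s = 0
    · have : S = 1 := by rw [hSdef, hMzero h0]; simp
      rw [this]; exact Matrix.PosSemidef.one
    refine Matrix.PosSemidef.of_dotProduct_mulVec_nonneg ?_ ?_
    · show Sᴴ = S
      rw [hSdef, conjTranspose_add, conjTranspose_one, conjTranspose_smul, hMpsd.1]
      congr 1
      simp [Complex.star_def, Complex.conj_ofReal]
    · intro x
      have hc0 : c ≤ 0 := by
        rw [hc]
        apply div_nonpos_of_nonpos_of_nonneg (by linarith) hs0
      set p : ℂ := ∑ j, u 0 j * x j with hp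
      have hMx : M *ᵥ x = fun i => (starRingEnd ℂ) (u 0 i) * p := by
        funext i
        rw [Matrix.mulVec, dotProduct, hp, Finset.mul_sum]
        exact Finset.sum_congr rfl fun j _ => by rw [hM]; ring
      have hform : star x ⬝ᵥ (S *ᵥ x)
          = ((∑ i, Complex.normSq (x i) + c * Complex.normSq p : ℝ) : ℂ) := by
        rw [hSdef, Matrix.add_mulVec, Matrix.one_mulVec, Matrix.smul_mulVec, hMx,
          dotProduct_add, dotProduct_smul]
        rw [Complex.ofReal_add, Complex.ofReal_mul]
        congr 1
        · rw [dotProduct, Complex.ofReal_sum]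
          refine Finset.sum_congr rfl fun i _ => ?_
          simp only [Pi.star_apply, Complex.star_def]
          rw [mul_comm, Complex.mul_conj]
        · rw [smul_eq_mul]
          congr 1
          rw [dotProduct]
          have hps : ∑ i, star x i * ((starRingEnd ℂ) (u 0 i) * p) = (starRingEnd ℂ) p * p := by
            rw [hp, map_sum, Finset.sum_mul]
            refine Finset.sum_congr rfl fun i _ => ?_
            simp only [Pi.star_apply, _root_.map_mul, Complex.star_def]
            ring
          rw [hps, mul_comm, Complex.mul_conj]
      rw [hform, Complex.zero_le_real]
      have hX0 : 0 ≤ ∑ i, Complex.normSq (x i) :=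
        Finset.sum_nonneg fun i _ => Complex.normSq_nonneg _
      have hCS : Complex.normSq p ≤ s * ∑ i, Complex.normSq (x i) := by
        rw [hsval, hp]; exact cs_complex (u 0) x
      have h5 : c * (s * ∑ i, Complex.normSq (x i)) ≤ c * Complex.normSq p :=
        mul_le_mul_of_nonpos_left hCS hc0
      have h6 : (∑ i, Complex.normSq (x i)) + c * (s * ∑ i, Complex.normSq (x i))
          = r * ∑ i, Complex.normSq (x i) := by rw [← hcs]; ring
      linarith [mul_nonneg hr0 hX0]
  have hsqrt : S = hPSD.sqrt := hSpsd.eq_sqrt_of_sq_eq hPSD (by rw [sq, hS2, ← h1])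
  have hcsC : (1:ℂ) + (c:ℂ)*(s:ℂ) = (r:ℂ) := by
    have h := congrArg (fun t : ℝ => (t:ℂ)) hcs
    push_cast at h
    exact h
  -- Part 2 : charpoly
  have hchar : (hPSD.sqrt).charpoly = (X - C 1) ^ n * (X - C ((r:ℝ) : ℂ)) := by
    rw [← hsqrt, Matrix.charpoly]
    have hcm : S.charmatrix = (X - C 1 : ℂ[X]) • (1 : Matrix (Fin (n+1)) (Fin (n+1)) ℂ[X])
        + Matrix.replicateCol (Fin 1) (fun i => C (-(c:ℂ) * (starRingEnd ℂ) (u 0 i)))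
          * Matrix.replicateRow (Fin 1) (fun j => C (u 0 j)) := by
      ext i j
      by_cases hij : i = j
      · subst hij
        rw [Matrix.charmatrix_apply_eq]
        simp only [Matrix.add_apply, Matrix.smul_apply, Matrix.one_apply_eq, smul_eq_mul,
          Matrix.mul_apply, Fin.sum_univ_one, Matrix.replicateCol_apply, Matrix.replicateRow_apply,
          hSdef, hM, Matrix.add_apply, Matrix.smul_apply, Matrix.one_apply_eq]
        simp only [_root_.map_add, _root_.map_mul, _root_.map_one, _root_.map_neg, Complex.ofReal_mul]
        ring
      · rw [Matrix.charmatrix_apply_ne _ _ _ hij]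
        simp only [Matrix.add_apply, Matrix.smul_apply, Matrix.one_apply_ne hij, smul_eq_mul,
          Matrix.mul_apply, Fin.sum_univ_one, Matrix.replicateCol_apply, Matrix.replicateRow_apply,
          hSdef, hM, Matrix.add_apply, Matrix.smul_apply, Matrix.one_apply_ne hij]
        simp only [_root_.map_add, _root_.map_mul, _root_.map_zero, _root_.map_neg]
        ring
    rw [hcm, det_smul_one_add_col_mul_row_poly _ _ _ (X_sub_C_ne_zero 1)]
    have hdp : (fun j => C (u 0 j)) ⬝ᵥ (fun i => C (-(c:ℂ) * (starRingEnd ℂ) (u 0 i)))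
        = C (-((c:ℂ) * (s:ℂ))) := by
      calc (fun j => C (u 0 j)) ⬝ᵥ (fun i => C (-(c:ℂ) * (starRingEnd ℂ) (u 0 i)))
          = C (∑ j, u 0 j * (-(c:ℂ) * (starRingEnd ℂ) (u 0 j))) := by
            rw [dotProduct, map_sum]
            exact Finset.sum_congr rfl fun j _ => (_root_.map_mul C _ _).symm
        _ = C (-((c:ℂ) * (s:ℂ))) := by
            congr 1
            calc ∑ j, u 0 j * (-(c:ℂ) * (starRingEnd ℂ) (u 0 j))
                = -(c:ℂ) * ∑ j, u 0 j * (starRingEnd ℂ) (u 0 j) := by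
                  rw [Finset.mul_sum]
                  exact Finset.sum_congr rfl fun j _ => by ring
              _ = -((c:ℂ) * (s:ℂ)) := by rw [husum]; ring
    rw [hdp]
    simp only [Fintype.card_fin, Nat.add_sub_cancel]
    congr 1
    rw [← hcsC]
    simp only [_root_.map_add, _root_.map_mul, _root_.map_one, _root_.map_neg]
    ring
  -- Part 3 : Frobenius norm
  have hfr : hPSD.sqrt - 1 = (c:ℂ) • M := by rw [← hsqrt, hSdef]; abel
  have htr2 : Matrix.trace ((hPSD.sqrt - 1)ᴴ * (hPSD.sqrt - 1)) = ((c^2 * s^2 : ℝ) : ℂ) := by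
    rw [hfr, conjTranspose_smul, hMpsd.1, Matrix.smul_mul, Matrix.mul_smul, smul_smul, hMM,
      smul_smul, Matrix.trace_smul, htrC, smul_eq_mul]
    simp only [Complex.star_def, Complex.conj_ofReal]
    push_cast
    ring
  have hcs2 : c * s = r - 1 := by linarith [hcs]
  have hfrob : frobNorm (hPSD.sqrt - 1) = |r - 1| := by
    rw [frobNorm, htr2, Complex.ofReal_re, show c^2*s^2 = (c*s)^2 by ring,
      Real.sqrt_sq_eq_abs, hcs2]
  exact ⟨h1, hchar, hfrob, by
    rw [hfrob]
    rw [abs_le]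
    constructor <;> linarith⟩
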